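/- The radial function φ constructed by patching the Bessel profile on [0,R₁] with B ln(R/r) on [R₁,R] satisfies κΔφ + (v₀²/κ)f(φ) ≥ 0 in the disc of radius R, where f ≥ f₁ and f₁ is the piecewise-linear cutoff nonlinearity: f₁(s) = 0 for s ≤ θ₁, f₁(s) = f(θ₂)(s-θ₁)/(θ₂-θ₁) for θ₁ ≤ s ≤ θ₂, f₁(s) = f(s) for s ≥ θ₂. That is, φ is a subsolution of the stationary reaction-diffusion equation. -/
import Mathlib


open Real

/-- The patched radial profile (Bessel on `[0,R₁]`, logarithmic on
`[R₁,R]`) is a subsolution: `κΔφ + (v₀²/κ)f(φ) ≥ 0` on the punctured disc `0 < r < R`,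
where `f ≥ f₁` and `f₁` is the piecewise-linear cutoff of the ignition nonlinearity. -/
theorem patched_profile_is_subsolution
    (κ v₀ θ₀ θ₁ θ₂ R₁ R : ℝ)
    (hκ : 0 < κ) (hv₀ : 0 < v₀)
    (hθ₀ : 0 < θ₀) (hθ01 : θ₀ < θ₁) (hθ12 : θ₁ < θ₂) (hθ2 : θ₂ < 1)
    (hR₁ : 0 < R₁) (hR₁R : R₁ < R)
    (f f₁ : ℝ → ℝ)
    (hfLip : ∃ Kf, LipschitzOnWith Kf f (Set.Icc 0 1))
    (hfθ₂ : 0 < f θ₂)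
    -- the piecewise-linear cutoff nonlinearity f₁:
    (hf₁a : ∀ s, s ≤ θ₁ → f₁ s = 0)
    (hf₁b : ∀ s, θ₁ ≤ s → s ≤ θ₂ → f₁ s = f θ₂ * (s - θ₁) / (θ₂ - θ₁))
    (hf₁c : ∀ s, θ₂ ≤ s → f₁ s = f s)
    (hf₁le : ∀ s, 0 ≤ s → s ≤ 1 → f₁ s ≤ f s)
    (φ : ℝ → ℝ)
    (hφC2 : ContDiffOn ℝ 2 φ (Set.Ioo 0 R))
    (hφrange : ∀ r, 0 ≤ φ r ∧ φ r ≤ θ₂)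
    -- interior piece: κΔφ + (v₀²/κ) f₁(φ) = 0 on (0,R₁)
    (hint : ∀ r ∈ Set.Ioo 0 R₁,
      κ * (deriv (deriv φ) r + deriv φ r / r) + (v₀^2 / κ) * f₁ (φ r) = 0)
    -- annulus piece: φ harmonic with φ ≤ θ₁ on (R₁,R)
    (hann : ∀ r ∈ Set.Ioo R₁ R,
      deriv (deriv φ) r + deriv φ r / r = 0 ∧ φ r ≤ θ₁) :
    ∀ r ∈ Set.Ioo 0 R,
      0 ≤ κ * (deriv (deriv φ) r + deriv φ r / r) + (v₀^2 / κ) * f (φ r) := by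

  -- auxiliary facts
  have hvκ : 0 < v₀ ^ 2 / κ := by positivity
  have hmem : ∀ r : ℝ, φ r ∈ Set.Icc (0:ℝ) 1 := fun r =>
    ⟨(hφrange r).1, le_of_lt (lt_of_le_of_lt (hφrange r).2 hθ2)⟩
  set g : ℝ → ℝ := fun r =>
    κ * (deriv (deriv φ) r + deriv φ r / r) + (v₀ ^ 2 / κ) * f (φ r) with hg
  -- g is nonnegative off R₁
  have hne : ∀ r ∈ Set.Ioo 0 R, r ≠ R₁ → 0 ≤ g r := by
    intro r hr hrne
    rcases lt_or_gt_of_ne hrne with hlt | hgt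
    · have h1 := hint r ⟨hr.1, hlt⟩
      have h2 := hf₁le (φ r) (hmem r).1 (hmem r).2
      simp only [hg]
      nlinarith
    · obtain ⟨h1, h2⟩ := hann r ⟨hgt, hr.2⟩
      have h3 : f₁ (φ r) = 0 := hf₁a _ h2
      have h4 := hf₁le (φ r) (hmem r).1 (hmem r).2
      simp only [hg, h1]
      nlinarith
  intro r hr
  rcases eq_or_ne r R₁ with heq | hrne
  · -- continuity argument at r = R₁
    have hopen : IsOpen (Set.Ioo (0:ℝ) R) := isOpen_Ioo
    obtain ⟨Kf, hKf⟩ := hfLip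
    have hφcont : ContinuousOn φ (Set.Ioo 0 R) := hφC2.continuousOn
    have hd1 : ContinuousOn (deriv φ) (Set.Ioo 0 R) :=
      hφC2.continuousOn_deriv_of_isOpen hopen one_le_two
    have hd2cd : ContDiffOn ℝ 1 (deriv φ) (Set.Ioo 0 R) := by
      have := hφC2.deriv_of_isOpen (m := 1) hopen (by norm_num)
      simpa using this
    have hd2 : ContinuousOn (deriv (deriv φ)) (Set.Ioo 0 R) :=
      hd2cd.continuousOn_deriv_of_isOpen hopen (le_refl 1)
    have hfφ : ContinuousOn (fun r => f (φ r)) (Set.Ioo 0 R) :=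
      hKf.continuousOn.comp hφcont (fun x _ => hmem x)
    have hgc : ContinuousOn g (Set.Ioo 0 R) := by
      apply ContinuousOn.add
      · apply ContinuousOn.mul continuousOn_const
        apply ContinuousOn.add hd2
        exact hd1.div continuousOn_id (fun x hx => ne_of_gt hx.1)
      · exact continuousOn_const.mul hfφ
    subst heq
    have hR₁mem : r ∈ Set.Ioo (0:ℝ) R := ⟨hR₁, hR₁R⟩
    have hcwa : ContinuousAt g r :=
      hgc.continuousAt (hopen.mem_nhds hR₁mem)
    have htend : Filter.Tendsto g (nhdsWithin r {r}ᶜ) (nhds (g r)) :=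
      hcwa.continuousWithinAt
    refine ge_of_tendsto (f := g) htend ?_
    have hIoo : Set.Ioo (0:ℝ) R ∈ nhdsWithin r {r}ᶜ :=
      nhdsWithin_le_nhds (hopen.mem_nhds hR₁mem)
    filter_upwards [hIoo, self_mem_nhdsWithin] with x hx hx'
    exact hne x hx hx'
  · exact hne r hr hrne
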